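/- Let p ≤ n, let C be a real p × n matrix of rank p, d ∈ ℝᵖ, and define P_c := I − Cᵀ(CCᵀ)⁻¹C and d_c := Cᵀ(CCᵀ)⁻¹d, and C₌ := {x ∈ ℝⁿ : Cx = d}. Let F : ℝⁿ → ℝⁿ be continuous and monotone on C₌, let β > 0 and y, λ ∈ ℝⁿ. Then the equation w + (1/β)·P_c F(w) − P_c y + (1/β)·P_c λ − d_c = 0 has a solution, the solution is unique, and it lies in C₌. -/

import Mathlib

open Matrix

lemma dot_self_nonneg {k : ℕ} (v : Fin k → ℝ) : 0 ≤ v ⬝ᵥ v :=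
  Finset.sum_nonneg fun _ _ => mul_self_nonneg _

noncomputable def toE {k : ℕ} (a : Fin k → ℝ) : EuclideanSpace ℝ (Fin k) :=
  (WithLp.equiv 2 (Fin k → ℝ)).symm a

lemma dot_eq_inner {k : ℕ} (a b : Fin k → ℝ) :
    a ⬝ᵥ b = inner (𝕜 := ℝ) (toE a) (toE b) := by
  simp [dotProduct, toE, PiLp.inner_apply, RCLike.inner_apply, mul_comm]

lemma norm_toE {k : ℕ} (a : Fin k → ℝ) : ‖toE a‖ = Real.sqrt (a ⬝ᵥ a) := by
  rw [norm_eq_sqrt_real_inner (toE a), ← dot_eq_inner]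

lemma dot_cs {k : ℕ} (a b : Fin k → ℝ) :
    a ⬝ᵥ b ≤ Real.sqrt (a ⬝ᵥ a) * Real.sqrt (b ⬝ᵥ b) := by
  rw [dot_eq_inner, ← norm_toE, ← norm_toE]
  exact real_inner_le_norm _ _

lemma sq_le_aux {q E : ℝ} (hq : 0 ≤ q) (hE : 0 ≤ E)
    (h : q ≤ Real.sqrt E * Real.sqrt q) : q ≤ E := by
  nlinarith [Real.sq_sqrt hq, Real.sq_sqrt hE, Real.sqrt_nonneg q, Real.sqrt_nonneg E,
    mul_self_nonneg (Real.sqrt q - Real.sqrt E)]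

lemma snoc_sub {k : ℕ} (u v : Fin k → ℝ) (t s : ℝ) :
    (Fin.snoc u t : Fin (k+1) → ℝ) - Fin.snoc v s = Fin.snoc (u - v) (t - s) := by
  funext i
  refine Fin.lastCases ?_ ?_ i <;> simp

lemma dot_split {k : ℕ} (a c : Fin (k+1) → ℝ) :
    a ⬝ᵥ c = (Fin.init a ⬝ᵥ Fin.init c) + a (Fin.last k) * c (Fin.last k) := by
  simp [dotProduct, Fin.sum_univ_castSucc, Fin.init]

lemma init_sub {k : ℕ} (a c : Fin (k+1) → ℝ) :
    Fin.init (a - c) = Fin.init a - Fin.init c := rfl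

/-- A continuous map on `ℝᵏ` that is strongly monotone (with constant 1) is surjective. -/
lemma strongMono_surj (k : ℕ) (G : (Fin k → ℝ) → (Fin k → ℝ)) (hG : Continuous G)
    (hmono : ∀ u v, (u - v) ⬝ᵥ (u - v) ≤ (G u - G v) ⬝ᵥ (u - v)) (b : Fin k → ℝ) :
    ∃ x, G x = b := by
  induction k with
  | zero => exact ⟨b, funext fun i => i.elim0⟩
  | succ k ih =>
    set binit : Fin k → ℝ := Fin.init b with hbinit
    set Gt : ℝ → (Fin k → ℝ) → (Fin k → ℝ) :=
      fun t x => Fin.init (G (Fin.snoc x t)) with hGt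
    -- monotonicity of the slice maps
    have mono_t : ∀ t u v, (u - v) ⬝ᵥ (u - v) ≤ (Gt t u - Gt t v) ⬝ᵥ (u - v) := by
      intro t u v
      have h := hmono (Fin.snoc u t) (Fin.snoc v t)
      rw [snoc_sub, dot_split, dot_split, init_sub] at h
      simpa [Fin.init_snoc, hGt] using h
    -- continuity of the slice maps
    have cont_snoc : ∀ t : ℝ, Continuous (fun x : Fin k → ℝ => (Fin.snoc x t : Fin (k+1) → ℝ)) := by
      intro t
      refine continuous_pi fun i => ?_
      refine Fin.lastCases ?_ (fun j => ?_) i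
      · simpa using (continuous_const : Continuous fun _ : Fin k → ℝ => t)
      · simp only [Fin.snoc_castSucc]
        exact continuous_apply j
    have cont_Gt : ∀ t : ℝ, Continuous (Gt t) := by
      intro t
      refine continuous_pi fun j => ?_
      exact (continuous_apply (Fin.castSucc j)).comp (hG.comp (cont_snoc t))
    -- existence and uniqueness for slices
    have hex : ∀ t : ℝ, ∃ x, Gt t x = binit := fun t => ih (Gt t) (cont_Gt t) (mono_t t) binit
    choose x hx using hex
    -- uniqueness for slices
    have huniq : ∀ (t : ℝ) (x₁ x₂ : Fin k → ℝ), Gt t x₁ = Gt t x₂ → x₁ = x₂ := by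
      intro t x₁ x₂ h
      have h2 := mono_t t x₁ x₂
      rw [h, sub_self, zero_dotProduct] at h2
      have h3 : (x₁ - x₂) ⬝ᵥ (x₁ - x₂) = 0 := le_antisymm h2 (dot_self_nonneg _)
      rw [dotProduct_self_eq_zero] at h3
      exact sub_eq_zero.mp h3
    -- stability estimate
    have hstab : ∀ s t : ℝ, (x t - x s) ⬝ᵥ (x t - x s) ≤
        (binit - Gt t (x s)) ⬝ᵥ (binit - Gt t (x s)) := by
      intro s t
      have h := mono_t t (x t) (x s)
      rw [hx t] at h
      refine sq_le_aux (dot_self_nonneg _) (dot_self_nonneg _) ?_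
      calc (x t - x s) ⬝ᵥ (x t - x s) ≤ (binit - Gt t (x s)) ⬝ᵥ (x t - x s) := h
        _ ≤ _ := dot_cs _ _
    -- continuity of the solution path
    have hcontx : Continuous x := by
      rw [continuous_iff_continuousAt]
      intro s
      have hE : Continuous fun t => (binit - Gt t (x s)) ⬝ᵥ (binit - Gt t (x s)) := by
        have hf : Continuous fun t : ℝ => binit - Gt t (x s) := by
          refine Continuous.sub continuous_const ?_
          refine continuous_pi fun j => ?_
          refine (continuous_apply (Fin.castSucc j)).comp (hG.comp ?_)
          refine continuous_pi fun i => ?_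
          refine Fin.lastCases ?_ (fun j' => ?_) i
          · simpa using continuous_id'
          · simpa using (continuous_const : Continuous fun _ : ℝ => x s j')
        exact continuous_finset_sum _ fun j _ =>
          ((continuous_apply j).comp hf).mul ((continuous_apply j).comp hf)
      have hE0 : (fun t => (binit - Gt t (x s)) ⬝ᵥ (binit - Gt t (x s))) s = 0 := by
        simp [hx s]
      have hq0 : Filter.Tendsto (fun t => (x t - x s) ⬝ᵥ (x t - x s)) (nhds s) (nhds 0) := by
        refine squeeze_zero (fun t => dot_self_nonneg _) (fun t => hstab s t) ?_
        have h5 := hE.continuousAt (x := s)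
        rw [ContinuousAt] at h5
        simp only at hE0
        rwa [hE0] at h5
      have hsq : Filter.Tendsto (fun t => Real.sqrt ((x t - x s) ⬝ᵥ (x t - x s)))
          (nhds s) (nhds 0) := by
        have := (Real.continuous_sqrt.tendsto 0).comp hq0
        simpa [Function.comp_def] using this
      rw [ContinuousAt, tendsto_pi_nhds]
      intro j
      have hbound : ∀ t, |x t j - x s j| ≤ Real.sqrt ((x t - x s) ⬝ᵥ (x t - x s)) := by
        intro t
        rw [← Real.sqrt_sq_eq_abs]
        refine Real.sqrt_le_sqrt ?_
        have : (x t j - x s j) ^ 2 = ((x t - x s) j) * ((x t - x s) j) := by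
          simp [sq]
        rw [this]
        exact Finset.single_le_sum (f := fun i => ((x t - x s) i) * ((x t - x s) i))
          (fun i _ => mul_self_nonneg _) (Finset.mem_univ j)
      have : Filter.Tendsto (fun t => x t j - x s j) (nhds s) (nhds 0) := by
        refine squeeze_zero_norm (fun t => ?_) hsq
        simpa using hbound t
      have := this.add (tendsto_const_nhds (x := x s j))
      simpa using this
    -- the last-coordinate function
    set h : ℝ → ℝ := fun t => G (Fin.snoc (x t) t) (Fin.last k) with hh
    have cont_snocx : Continuous fun t : ℝ => (Fin.snoc (x t) t : Fin (k+1) → ℝ) := by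
      refine continuous_pi fun i => ?_
      refine Fin.lastCases ?_ (fun j => ?_) i
      · simpa using continuous_id'
      · simp only [Fin.snoc_castSucc]
        exact (continuous_apply j).comp hcontx
    have hconth : Continuous h := (continuous_apply (Fin.last k)).comp (hG.comp cont_snocx)
    -- monotone growth of h
    have hinc : ∀ s t : ℝ, (t - s) ^ 2 ≤ (h t - h s) * (t - s) := by
      intro s t
      have hm := hmono (Fin.snoc (x t) t) (Fin.snoc (x s) s)
      rw [snoc_sub, dot_split, dot_split, init_sub] at hm
      have hz : Fin.init (G (Fin.snoc (x t) t)) - Fin.init (G (Fin.snoc (x s) s))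
          = 0 := by
        have h1 : Gt t (x t) = binit := hx t
        have h2 : Gt s (x s) = binit := hx s
        simp only [hGt] at h1 h2
        rw [h1, h2, sub_self]
      rw [hz, zero_dotProduct] at hm
      have hq := dot_self_nonneg (x t - x s)
      simp only [Fin.init_snoc, Fin.snoc_last, Pi.sub_apply] at hm
      show (t - s) ^ 2 ≤
        (G (Fin.snoc (x t) t) (Fin.last k) - G (Fin.snoc (x s) s) (Fin.last k)) * (t - s)
      nlinarith [hm, hq]
    have hub : ∀ t : ℝ, 0 ≤ t → h 0 + t ≤ h t := by
      intro t ht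
      rcases ht.eq_or_lt with rfl | ht'
      · simp
      · have := hinc 0 t
        have h2 : t ≤ h t - h 0 := by nlinarith
        linarith
    have hlb : ∀ t : ℝ, t ≤ 0 → h t ≤ h 0 + t := by
      intro t ht
      rcases ht.eq_or_lt with rfl | ht'
      · simp
      · have := hinc t 0
        have h2 : -t ≤ h 0 - h t := by nlinarith
        linarith
    -- find the right parameter by the intermediate value theorem
    set bl : ℝ := b (Fin.last k) with hbl
    set T : ℝ := |bl - h 0| + 1 with hT
    have hT0 : 0 ≤ T := by positivity
    have hhi : bl ≤ h T := by
      have := hub T hT0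
      have h2 : bl - h 0 ≤ |bl - h 0| := le_abs_self _
      linarith
    have hlo : h (-T) ≤ bl := by
      have := hlb (-T) (by linarith)
      have h2 : h 0 - bl ≤ |bl - h 0| := by
        rw [abs_sub_comm]
        exact le_abs_self _
      linarith
    have hmem : bl ∈ Set.Icc (h (-T)) (h T) := ⟨hlo, hhi⟩
    have := intermediate_value_Icc (by linarith : (-T : ℝ) ≤ T) hconth.continuousOn
    obtain ⟨t0, _, ht0⟩ := this hmem
    refine ⟨Fin.snoc (x t0) t0, funext fun i => ?_⟩
    refine Fin.lastCases ?_ (fun j => ?_) i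
    · exact ht0
    · have h1 : Gt t0 (x t0) = binit := hx t0
      have := congrFun h1 j
      simpa [hGt, hbinit, Fin.init] using this

/-- Theorem: solution of the ACVI x-subproblem equation exists,
is unique, and lies in `C₌ = {x : Cx = d}`. -/
theorem stmt10 {n p : ℕ} (hpn : p ≤ n) (C : Matrix (Fin p) (Fin n) ℝ)
    (hrank : C.rank = p) (d : Fin p → ℝ)
    (F : (Fin n → ℝ) → (Fin n → ℝ)) (hF : Continuous F)
    (hmono : ∀ u v : Fin n → ℝ, C.mulVec u = d → C.mulVec v = d →
      0 ≤ (F u - F v) ⬝ᵥ (u - v))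
    (β : ℝ) (hβ : 0 < β) (y lam : Fin n → ℝ)
    (Pc : Matrix (Fin n) (Fin n) ℝ) (hPc : Pc = 1 - Cᵀ * (C * Cᵀ)⁻¹ * C)
    (dc : Fin n → ℝ) (hdc : dc = (Cᵀ * (C * Cᵀ)⁻¹).mulVec d) :
    ∃ w : Fin n → ℝ,
      (w + (1/β) • Pc.mulVec (F w) - Pc.mulVec y + (1/β) • Pc.mulVec lam - dc = 0) ∧
      C.mulVec w = d ∧
      ∀ w' : Fin n → ℝ,
        (w' + (1/β) • Pc.mulVec (F w') - Pc.mulVec y + (1/β) • Pc.mulVec lam - dc = 0)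
          → w' = w := by
  -- invertibility of C * Cᵀ
  have hU : IsUnit (C * Cᵀ) := by
    have h1 : (C * Cᵀ).rank = p := by rw [rank_self_mul_transpose, hrank]
    rw [← Matrix.mulVec_surjective_iff_isUnit]
    have h2 : LinearMap.range (C * Cᵀ).mulVecLin = ⊤ := by
      apply Submodule.eq_top_of_finrank_eq
      rw [← Matrix.rank] at *
      rw [h1]
      simp [Module.finrank_fintype_fun_eq_card]
    exact fun v => LinearMap.range_eq_top.mp h2 v
  have hUdet : IsUnit (C * Cᵀ).det := (Matrix.isUnit_iff_isUnit_det _).mp hU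
  have hinv1 : (C * Cᵀ) * (C * Cᵀ)⁻¹ = 1 := Matrix.mul_nonsing_inv _ hUdet
  have hinv2 : (C * Cᵀ)⁻¹ * (C * Cᵀ) = 1 := Matrix.nonsing_inv_mul _ hUdet
  -- basic matrix identities
  have hCP : C * Pc = 0 := by
    rw [hPc, Matrix.mul_sub, Matrix.mul_one, ← Matrix.mul_assoc, ← Matrix.mul_assoc,
      hinv1, Matrix.one_mul, sub_self]
  have hPcCt : Pc * Cᵀ = 0 := by
    rw [hPc, Matrix.sub_mul, Matrix.one_mul, Matrix.mul_assoc, Matrix.mul_assoc,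
      hinv2, Matrix.mul_one, sub_self]
  have hPcT : Pcᵀ = Pc := by
    rw [hPc]
    simp only [Matrix.transpose_sub, Matrix.transpose_one, Matrix.transpose_mul,
      Matrix.transpose_transpose, Matrix.transpose_nonsing_inv]
    rw [← Matrix.mul_assoc]
  have hPc2 : Pc * Pc = Pc := by
    nth_rewrite 1 [hPc]
    rw [Matrix.sub_mul, Matrix.one_mul, Matrix.mul_assoc, hCP, Matrix.mul_zero, sub_zero]
  have hCdc : C.mulVec dc = d := by
    rw [hdc, Matrix.mulVec_mulVec, ← Matrix.mul_assoc, hinv1, Matrix.one_mulVec]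
  have hPcdc : Pc.mulVec dc = 0 := by
    rw [hdc, Matrix.mulVec_mulVec, ← Matrix.mul_assoc, hPcCt, Matrix.zero_mul,
      Matrix.zero_mulVec]
  have hPcKer : ∀ v : Fin n → ℝ, C.mulVec v = 0 → Pc.mulVec v = v := by
    intro v hv
    rw [hPc, Matrix.sub_mulVec, Matrix.one_mulVec, Matrix.mul_assoc,
      ← Matrix.mulVec_mulVec, ← Matrix.mulVec_mulVec, hv, Matrix.mulVec_zero,
      Matrix.mulVec_zero, sub_zero]
  -- symmetry of Pc as a bilinear pairing
  have hsym : ∀ a c : Fin n → ℝ, Pc.mulVec a ⬝ᵥ c = a ⬝ᵥ Pc.mulVec c := by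
    intro a c
    rw [Matrix.dotProduct_mulVec]
    congr 1
    rw [← hPcT, Matrix.vecMul_transpose, hPcT]
  -- the reduced strongly monotone map
  set H : (Fin n → ℝ) → (Fin n → ℝ) := fun z =>
    z + (1/β) • Pc.mulVec (F (dc + Pc.mulVec z)) - Pc.mulVec y + (1/β) • Pc.mulVec lam
    with hH
  have hmv : Continuous fun v : Fin n → ℝ => Pc.mulVec v :=
    (Matrix.mulVecLin Pc).continuous_of_finiteDimensional
  have hHcont : Continuous H := by
    refine Continuous.add (Continuous.sub (Continuous.add continuous_id ?_) continuous_const)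
      continuous_const
    exact ((hmv.comp (hF.comp (continuous_const.add hmv))).const_smul (1/β))
  have hmem : ∀ z : Fin n → ℝ, C.mulVec (dc + Pc.mulVec z) = d := by
    intro z
    rw [Matrix.mulVec_add, hCdc, Matrix.mulVec_mulVec, hCP, Matrix.zero_mulVec, add_zero]
  have hHmono : ∀ u v, (u - v) ⬝ᵥ (u - v) ≤ (H u - H v) ⬝ᵥ (u - v) := by
    intro u v
    have hdiff : H u - H v = (u - v) +
        (1/β) • (Pc.mulVec (F (dc + Pc.mulVec u)) - Pc.mulVec (F (dc + Pc.mulVec v))) := by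
      simp only [hH]
      module
    rw [hdiff, add_dotProduct, smul_dotProduct, smul_eq_mul]
    have h1 : (Pc.mulVec (F (dc + Pc.mulVec u)) - Pc.mulVec (F (dc + Pc.mulVec v)))
        = Pc.mulVec (F (dc + Pc.mulVec u) - F (dc + Pc.mulVec v)) := by
      rw [Matrix.mulVec_sub]
    have h2 : Pc.mulVec (u - v) = (dc + Pc.mulVec u) - (dc + Pc.mulVec v) := by
      rw [Matrix.mulVec_sub]
      abel
    have h3 : 0 ≤ (Pc.mulVec (F (dc + Pc.mulVec u)) - Pc.mulVec (F (dc + Pc.mulVec v)))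
        ⬝ᵥ (u - v) := by
      rw [h1, hsym, h2]
      exact hmono _ _ (hmem u) (hmem v)
    have h4 : 0 ≤ (1/β) * ((Pc.mulVec (F (dc + Pc.mulVec u)) -
        Pc.mulVec (F (dc + Pc.mulVec v))) ⬝ᵥ (u - v)) :=
      mul_nonneg (by positivity) h3
    linarith
  obtain ⟨z, hz⟩ := strongMono_surj n H hHcont hHmono 0
  set w : Fin n → ℝ := dc + Pc.mulVec z with hw
  -- the equation for w
  have heq : w + (1/β) • Pc.mulVec (F w) - Pc.mulVec y + (1/β) • Pc.mulVec lam - dc = 0 := by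
    have hA : w + (1/β) • Pc.mulVec (F w) - Pc.mulVec y + (1/β) • Pc.mulVec lam - dc
        = Pc.mulVec z - z + H z := by
      simp only [hH, hw]
      module
    have hB : w + (1/β) • Pc.mulVec (F w) - Pc.mulVec y + (1/β) • Pc.mulVec lam - dc
        = Pc.mulVec (z + (1/β) • F w - y + (1/β) • lam) - Pc.mulVec dc := by
      simp only [hw, Matrix.mulVec_add, Matrix.mulVec_sub, Matrix.mulVec_smul,
        Matrix.mulVec_mulVec, hPc2, hPcdc]
      module
    rw [hz, add_zero] at hA
    -- so Pc *ᵥ z - z is in the range of Pc, hence killed by (1 - Pc) twice gives 0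
    have hC : Pc.mulVec (Pc.mulVec z - z) = 0 := by
      rw [Matrix.mulVec_sub, Matrix.mulVec_mulVec, hPc2, sub_self]
    have hD : Pc.mulVec (Pc.mulVec z - z) = Pc.mulVec z - z := by
      nth_rewrite 1 [← hA]
      rw [hB, hPcdc, sub_zero, Matrix.mulVec_mulVec, hPc2, ← sub_zero (Pc.mulVec _),
        ← hPcdc]
      rw [← hB, hA]
    rw [hA, ← hD, hC]
  have hCw : C.mulVec w = d := hmem z
  refine ⟨w, heq, hCw, ?_⟩
  -- uniqueness
  intro w' hw'
  have hCw' : C.mulVec w' = d := by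
    have h4 := congrArg (fun v => C.mulVec v) hw'
    simp only [Matrix.mulVec_add, Matrix.mulVec_sub, Matrix.mulVec_smul,
      Matrix.mulVec_mulVec, hCP, Matrix.zero_mulVec, hCdc, Matrix.mulVec_zero,
      smul_zero, add_zero, sub_zero] at h4
    exact sub_eq_zero.mp h4
  set z' : Fin n → ℝ := w' - dc with hz'
  have hCz' : C.mulVec z' = 0 := by
    rw [hz', Matrix.mulVec_sub, hCw', hCdc, sub_self]
  have hPz' : Pc.mulVec z' = z' := hPcKer z' hCz'
  have hwz' : w' = dc + Pc.mulVec z' := by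
    rw [hPz', hz']
    abel
  have hHz' : H z' = 0 := by
    have : H z' = w' + (1/β) • Pc.mulVec (F w') - Pc.mulVec y + (1/β) • Pc.mulVec lam
        - dc := by
      simp only [hH]
      rw [← hwz', hz']
      module
    rw [this, hw']
  have hzz : z' = z := by
    have h5 := hHmono z' z
    rw [hHz', hz, sub_self, zero_dotProduct] at h5
    have h6 : (z' - z) ⬝ᵥ (z' - z) = 0 := le_antisymm h5 (dot_self_nonneg _)
    rw [dotProduct_self_eq_zero] at h6
    exact sub_eq_zero.mp h6
  rw [hwz', hzz, ← hw]
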